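/- For all indices i, k, l, j with 0 ≤ i ≤ k < l ≤ j ≤ n−1 and every s with k ≤ s ≤ l, the same-projection points on the two segments satisfy dist (q(s,k,l)) (q(s,i,j)) ≤ max (dist (p k) (q(k,i,j))) (dist (p l) (q(l,i,j))). (Interpolation step in the proof of Lemma 5: if the endpoints p k, p l are ε-close to the segment [p i, p j] measured orthogonally to u, then every same-projection point of [p k, p l] is ε-close to the corresponding point of [p i, p j].) -/

import Mathlib

/-- The projection value `t s = ⟪p s, u⟫` of the cloud point `p s` onto the direction `u`. -/
noncomputable def projVal {d n : ℕ} (p : Fin n → EuclideanSpace ℝ (Fin d))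
    (u : EuclideanSpace ℝ (Fin d)) (s : Fin n) : ℝ :=
  inner ℝ (p s) u

/-- The point `q(s,i,j)` of the straight segment `[p i, p j]` whose projection
onto `u` equals `t s`. -/
noncomputable def segPoint {d n : ℕ} (p : Fin n → EuclideanSpace ℝ (Fin d))
    (u : EuclideanSpace ℝ (Fin d)) (s i j : Fin n) : EuclideanSpace ℝ (Fin d) :=
  p i + ((projVal p u s - projVal p u i) / (projVal p u j - projVal p u i)) • (p j - p i)

/-- The orthogonal distance `dOrth(s,i,j)` from `p s` to the segment `[p i, p j]`,
measured orthogonally to `u`. -/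
noncomputable def dOrth {d n : ℕ} (p : Fin n → EuclideanSpace ℝ (Fin d))
    (u : EuclideanSpace ℝ (Fin d)) (s i j : Fin n) : ℝ :=
  dist (p s) (segPoint p u s i j)

/-- Interpolation step in the proof of Lemma 5: if the endpoints `p k`, `p l` are
`ε`-close to the segment `[p i, p j]` measured orthogonally to `u`, then every
same-projection point of `[p k, p l]` is `ε`-close to the corresponding point of
`[p i, p j]`. -/
theorem interpolation_step {d n : ℕ} (hd : 1 ≤ d) (hn : 2 ≤ n)
    (p : Fin n → EuclideanSpace ℝ (Fin d)) (u : EuclideanSpace ℝ (Fin d))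
    (hu : ‖u‖ = 1) (hmono : StrictMono (projVal p u))
    (i k l j : Fin n) (hik : i ≤ k) (hkl : k < l) (hlj : l ≤ j)
    (s : Fin n) (hks : k ≤ s) (hsl : s ≤ l) :
    dist (segPoint p u s k l) (segPoint p u s i j) ≤
      max (dist (p k) (segPoint p u k i j)) (dist (p l) (segPoint p u l i j)) := by
  set a := projVal p u with ha
  have hij : i < j := lt_of_le_of_lt hik (lt_of_lt_of_le hkl hlj)
  have hkl' : a k < a l := hmono hkl
  have hij' : a i < a j := hmono hij
  have hlk0 : a l - a k ≠ 0 := by linarith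
  have hji0 : a j - a i ≠ 0 := by linarith
  set lam : ℝ := (a s - a k) / (a l - a k) with hlam
  have hks' : a k ≤ a s := hmono.le_iff_le.mpr hks
  have hsl' : a s ≤ a l := hmono.le_iff_le.mpr hsl
  have hlam0 : 0 ≤ lam := div_nonneg (by linarith) (by linarith)
  have hlam1 : lam ≤ 1 := by
    rw [hlam, div_le_one (by linarith)]; linarith
  have hscal : (1 - lam) * ((a k - a i) / (a j - a i)) + lam * ((a l - a i) / (a j - a i))
      = (a s - a i) / (a j - a i) := by
    rw [hlam]
    field_simp
    ring
  have hkey : segPoint p u s i j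
      = (1 - lam) • segPoint p u k i j + lam • segPoint p u l i j := by
    simp only [segPoint, ← ha, ← hscal]
    module
  have hqkl : segPoint p u s k l = (1 - lam) • p k + lam • p l := by
    simp only [segPoint, ← ha, ← hlam]
    module
  have hdiff : segPoint p u s k l - segPoint p u s i j
      = (1 - lam) • (p k - segPoint p u k i j) + lam • (p l - segPoint p u l i j) := by
    rw [hkey, hqkl]; module
  rw [dist_eq_norm, hdiff]
  have h1 : ‖(1 - lam) • (p k - segPoint p u k i j) + lam • (p l - segPoint p u l i j)‖
      ≤ (1 - lam) * ‖p k - segPoint p u k i j‖ + lam * ‖p l - segPoint p u l i j‖ := by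
    refine (norm_add_le _ _).trans ?_
    rw [norm_smul, norm_smul, Real.norm_eq_abs, Real.norm_eq_abs,
      abs_of_nonneg (by linarith), abs_of_nonneg hlam0]
  refine h1.trans ?_
  rw [dist_eq_norm, dist_eq_norm]
  set dk := ‖p k - segPoint p u k i j‖
  set dl := ‖p l - segPoint p u l i j‖
  have hdk : dk ≤ max dk dl := le_max_left _ _
  have hdl : dl ≤ max dk dl := le_max_right _ _
  nlinarith
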